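/- Let X be a topological space and f : X → ℝ a continuous function. The following are equivalent: (a) for every open set O ⊆ ℝ, the preimage f⁻¹(O) is a union of countably many clopen subsets of X (i.e., f ∈ A(X)); (b) for every ε > 0 there exists a countable cover of X by clopen sets on each of which the oscillation of f is at most ε (i.e., f ∈ U_{ℵ₀}(X)); (c) for every ε > 0 there exists a locally constant function g : X → ℝ with |f(x) − g(x)| ≤ ε for all x ∈ X. -/
import Mathlib


open Set

private lemma stmt5_ab {X : Type*} [TopologicalSpace X] (f : X → ℝ)
    (ha : ∀ O : Set ℝ, IsOpen O → ∃ 𝒰 : Set (Set X), 𝒰.Countable ∧ (∀ A ∈ 𝒰, IsClopen A) ∧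
        f ⁻¹' O = ⋃₀ 𝒰) :
    ∀ ε : ℝ, 0 < ε → ∃ 𝒜 : Set (Set X), 𝒜.Countable ∧ ⋃₀ 𝒜 = Set.univ ∧
        ∀ A ∈ 𝒜, IsClopen A ∧ ∀ x ∈ A, ∀ y ∈ A, |f x - f y| ≤ ε := by
  intro ε hε
  choose 𝒰 h1 h2 h3 using fun q : ℚ => ha (Ioo (q : ℝ) (q + ε)) isOpen_Ioo
  refine ⟨⋃ q : ℚ, 𝒰 q, countable_iUnion h1, ?_, ?_⟩
  · apply eq_univ_of_forall
    intro x
    obtain ⟨q, hq1, hq2⟩ := exists_rat_btwn (show f x - ε < f x by linarith)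
    have hx : x ∈ f ⁻¹' Ioo (q : ℝ) (q + ε) := ⟨hq2, by linarith⟩
    rw [h3 q] at hx
    obtain ⟨A, hA, hxA⟩ := hx
    exact ⟨A, mem_iUnion.2 ⟨q, hA⟩, hxA⟩
  · intro A hA
    obtain ⟨q, hAq⟩ := mem_iUnion.1 hA
    refine ⟨h2 q A hAq, fun x hx y hy => ?_⟩
    have hxm : x ∈ f ⁻¹' Ioo (q : ℝ) (q + ε) := by
      rw [h3 q]; exact ⟨A, hAq, hx⟩
    have hym : y ∈ f ⁻¹' Ioo (q : ℝ) (q + ε) := by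
      rw [h3 q]; exact ⟨A, hAq, hy⟩
    obtain ⟨hx1, hx2⟩ := hxm
    obtain ⟨hy1, hy2⟩ := hym
    rw [abs_le]
    constructor <;> linarith

private lemma stmt5_ba {X : Type*} [TopologicalSpace X] (f : X → ℝ)
    (hb : ∀ ε : ℝ, 0 < ε → ∃ 𝒜 : Set (Set X), 𝒜.Countable ∧ ⋃₀ 𝒜 = Set.univ ∧
        ∀ A ∈ 𝒜, IsClopen A ∧ ∀ x ∈ A, ∀ y ∈ A, |f x - f y| ≤ ε) :
    ∀ O : Set ℝ, IsOpen O → ∃ 𝒰 : Set (Set X), 𝒰.Countable ∧ (∀ A ∈ 𝒰, IsClopen A) ∧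
        f ⁻¹' O = ⋃₀ 𝒰 := by
  intro O hO
  choose 𝒜 hc hcov hprop using fun n : ℕ => hb (1 / ((n : ℝ) + 1)) (by positivity)
  refine ⟨{A | ∃ n, A ∈ 𝒜 n ∧ A ⊆ f ⁻¹' O}, ?_, ?_, ?_⟩
  · exact (countable_iUnion hc).mono (fun A hA => by
      obtain ⟨n, h, -⟩ := hA; exact mem_iUnion.2 ⟨n, h⟩)
  · rintro A ⟨n, hA, -⟩
    exact (hprop n A hA).1
  · apply Subset.antisymm
    · intro x hx
      obtain ⟨δ, hδ, hball⟩ := Metric.isOpen_iff.1 hO (f x) hx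
      obtain ⟨n, hn⟩ := exists_nat_one_div_lt hδ
      have hx' : x ∈ ⋃₀ 𝒜 n := by rw [hcov n]; exact mem_univ x
      obtain ⟨A, hA, hxA⟩ := hx'
      refine ⟨A, ⟨n, hA, fun y hy => ?_⟩, hxA⟩
      apply hball
      have h1 := (hprop n A hA).2 y hy x hxA
      rw [Metric.mem_ball, Real.dist_eq]
      calc |f y - f x| ≤ 1 / ((n : ℝ) + 1) := h1
        _ < δ := hn
    · rintro x ⟨A, ⟨n, hA, hsub⟩, hxA⟩
      exact hsub hxA

private lemma stmt5_bc {X : Type*} [TopologicalSpace X] (f : X → ℝ)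
    (hb : ∀ ε : ℝ, 0 < ε → ∃ 𝒜 : Set (Set X), 𝒜.Countable ∧ ⋃₀ 𝒜 = Set.univ ∧
        ∀ A ∈ 𝒜, IsClopen A ∧ ∀ x ∈ A, ∀ y ∈ A, |f x - f y| ≤ ε) :
    ∀ ε : ℝ, 0 < ε → ∃ g : X → ℝ, IsLocallyConstant g ∧ ∀ x : X, |f x - g x| ≤ ε := by
  classical
  intro ε hε
  by_cases hX : Nonempty X
  · obtain ⟨𝒜, hc, hcov, hprop⟩ := hb ε hε
    have hne : 𝒜.Nonempty := by
      obtain ⟨x⟩ := hX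
      have hx : x ∈ ⋃₀ 𝒜 := by rw [hcov]; exact mem_univ x
      obtain ⟨A, hA, -⟩ := hx
      exact ⟨A, hA⟩
    obtain ⟨e, he⟩ := hc.exists_eq_range hne
    have hmem : ∀ x : X, ∃ n, x ∈ e n := by
      intro x
      have hx : x ∈ ⋃₀ 𝒜 := by rw [hcov]; exact mem_univ x
      obtain ⟨A, hA, hxA⟩ := hx
      rw [he] at hA
      obtain ⟨n, rfl⟩ := hA
      exact ⟨n, hxA⟩
    have hclopen : ∀ n, IsClopen (e n) := fun n =>
      (hprop _ (he ▸ mem_range_self n)).1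
    have hosc : ∀ n, ∀ x ∈ e n, ∀ y ∈ e n, |f x - f y| ≤ ε := fun n =>
      (hprop _ (he ▸ mem_range_self n)).2
    haveI := hX
    set ix : X → ℕ := fun x => Nat.find (hmem x) with hixdef
    have hixmem : ∀ x, x ∈ e (ix x) := fun x => Nat.find_spec (hmem x)
    set c : ℕ → X := fun n =>
      if h : (e n).Nonempty then h.choose else Classical.arbitrary X with hcdef
    have hcmem : ∀ n, (e n).Nonempty → c n ∈ e n := by
      intro n hn
      simp only [hcdef, dif_pos hn]
      exact hn.choose_spec
    refine ⟨fun x => f (c (ix x)), ?_, ?_⟩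
    · rw [IsLocallyConstant.iff_exists_open]
      intro x
      refine ⟨e (ix x) \ ⋃ m ∈ Finset.range (ix x), e m, ?_, ⟨hixmem x, ?_⟩, ?_⟩
      · exact (hclopen _).isOpen.sdiff
          (isClosed_biUnion_finset fun m _ => (hclopen m).isClosed)
      · simp only [mem_iUnion]
        rintro ⟨m, hm, hxm⟩
        exact Nat.find_min (hmem x) (Finset.mem_range.1 hm) hxm
      · rintro y ⟨hy1, hy2⟩
        have h1 : ix y ≤ ix x := Nat.find_min' (hmem y) hy1
        have h2 : ¬ ix y < ix x := fun h =>
          hy2 (mem_iUnion₂.2 ⟨ix y, Finset.mem_range.2 h, hixmem y⟩)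
        have h3 : ix y = ix x := le_antisymm h1 (not_lt.1 h2)
        simp only [h3]
    · intro x
      exact hosc (ix x) x (hixmem x) (c (ix x)) (hcmem _ ⟨x, hixmem x⟩)
  · refine ⟨fun _ => 0, ?_, fun x => absurd ⟨x⟩ hX⟩
    exact IsLocallyConstant.const 0

private lemma stmt5_cb {X : Type*} [TopologicalSpace X] (f : X → ℝ)
    (hc : ∀ ε : ℝ, 0 < ε → ∃ g : X → ℝ, IsLocallyConstant g ∧ ∀ x : X, |f x - g x| ≤ ε) :
    ∀ ε : ℝ, 0 < ε → ∃ 𝒜 : Set (Set X), 𝒜.Countable ∧ ⋃₀ 𝒜 = Set.univ ∧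
        ∀ A ∈ 𝒜, IsClopen A ∧ ∀ x ∈ A, ∀ y ∈ A, |f x - f y| ≤ ε := by
  intro ε hε
  obtain ⟨g, hg, hfg⟩ := hc (ε / 4) (by linarith)
  have h2 : (0 : ℝ) < ε / 2 := by linarith
  refine ⟨range (fun n : ℤ => g ⁻¹' Ico ((n : ℝ) * (ε / 2)) (((n : ℝ) + 1) * (ε / 2))),
    countable_range _, ?_, ?_⟩
  · apply eq_univ_of_forall
    intro x
    set n := ⌊g x / (ε / 2)⌋ with hn
    refine ⟨_, mem_range_self n, ?_, ?_⟩
    · have h3 : (n : ℝ) ≤ g x / (ε / 2) := Int.floor_le _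
      calc (n : ℝ) * (ε / 2) ≤ (g x / (ε / 2)) * (ε / 2) := by nlinarith
        _ = g x := by field_simp
    · have h3 : g x / (ε / 2) < (n : ℝ) + 1 := Int.lt_floor_add_one _
      have h4 : g x = (g x / (ε / 2)) * (ε / 2) := by field_simp
      rw [h4]
      nlinarith
  · rintro A ⟨n, rfl⟩
    constructor
    · constructor
      · rw [← isOpen_compl_iff, ← preimage_compl]
        exact hg _
      · exact hg _
    · intro x hx y hy
      obtain ⟨hx1, hx2⟩ := hx
      obtain ⟨hy1, hy2⟩ := hy
      have e1 := hfg x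
      have e2 := hfg y
      rw [abs_le] at e1 e2 ⊢
      have hexp : ((n : ℝ) + 1) * (ε / 2) = (n : ℝ) * (ε / 2) + ε / 2 := by ring
      constructor <;> linarith [hexp]

theorem stmt5 {X : Type*} [TopologicalSpace X] (f : X → ℝ) (hf : Continuous f) :
    ((∀ O : Set ℝ, IsOpen O → ∃ 𝒰 : Set (Set X), 𝒰.Countable ∧ (∀ A ∈ 𝒰, IsClopen A) ∧
        f ⁻¹' O = ⋃₀ 𝒰) ↔
      (∀ ε : ℝ, 0 < ε → ∃ 𝒜 : Set (Set X), 𝒜.Countable ∧ ⋃₀ 𝒜 = Set.univ ∧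
        ∀ A ∈ 𝒜, IsClopen A ∧ ∀ x ∈ A, ∀ y ∈ A, |f x - f y| ≤ ε)) ∧
    ((∀ ε : ℝ, 0 < ε → ∃ 𝒜 : Set (Set X), 𝒜.Countable ∧ ⋃₀ 𝒜 = Set.univ ∧
        ∀ A ∈ 𝒜, IsClopen A ∧ ∀ x ∈ A, ∀ y ∈ A, |f x - f y| ≤ ε) ↔
      (∀ ε : ℝ, 0 < ε → ∃ g : X → ℝ, IsLocallyConstant g ∧ ∀ x : X, |f x - g x| ≤ ε)) := by
  exact ⟨⟨stmt5_ab f, stmt5_ba f⟩, ⟨stmt5_bc f, stmt5_cb f⟩⟩
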